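/- If G has m ≥ 2 edges and σ denotes the standard deviation of the d-radii of the edges of G, i.e. σ = √((1/m) Σ_{uv ∈ E(G)} (|z_{uv}| − SO(G)/m)²), then (m/√(m−1))·σ < SO(G). -/

import Mathlib

open Finset Real

noncomputable def dRad {V : Type*} [Fintype V] (G : SimpleGraph V) [DecidableRel G.Adj]
    (e : Sym2 V) : ℝ :=
  Sym2.lift ⟨fun u v => Real.sqrt ((G.degree u : ℝ) ^ 2 + (G.degree v : ℝ) ^ 2),
    fun u v => by simp [add_comm]⟩ e

noncomputable def somborIndex {V : Type*} [Fintype V] [DecidableEq V] (G : SimpleGraph V)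
    [DecidableRel G.Adj] : ℝ :=
  ∑ e ∈ G.edgeFinset, dRad G e

lemma dRad_pos {V : Type*} [Fintype V] [DecidableEq V] (G : SimpleGraph V) [DecidableRel G.Adj]
    {e : Sym2 V} (he : e ∈ G.edgeFinset) : 0 < dRad G e := by
  induction e using Sym2.ind with
  | _ u v =>
    rw [SimpleGraph.mem_edgeFinset, SimpleGraph.mem_edgeSet] at he
    have hd : 0 < G.degree u := by
      rw [SimpleGraph.degree_pos_iff_exists_adj]; exact ⟨v, he⟩
    have : (0:ℝ) < (G.degree u : ℝ) ^ 2 + (G.degree v : ℝ) ^ 2 := by positivity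
    simpa [dRad] using Real.sqrt_pos.mpr this

/-- If `G` has `m ≥ 2` edges and `σ` is the standard deviation of the d-radii of the edges of
`G`, then `(m/√(m−1))·σ < SO(G)`. -/
theorem stmt7 {V : Type*} [Fintype V] [DecidableEq V] (G : SimpleGraph V) [DecidableRel G.Adj]
    (m : ℕ) (hm : G.edgeFinset.card = m) (h2 : 2 ≤ m) :
    ((m : ℝ) / Real.sqrt ((m : ℝ) - 1)) *
        Real.sqrt ((1 / m) * ∑ e ∈ G.edgeFinset, (dRad G e - somborIndex G / m) ^ 2)
      < somborIndex G := by
  set S := somborIndex G with hS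
  set E := G.edgeFinset with hE
  have hm1 : (1:ℝ) ≤ (m:ℝ) - 1 := by
    have : (2:ℝ) ≤ (m:ℝ) := by exact_mod_cast h2
    linarith
  have hmpos : (0:ℝ) < m := by positivity
  -- each dRad is less than S
  have hlt : ∀ e ∈ E, dRad G e < S := by
    intro e he
    obtain ⟨f, hf, hfe⟩ := Finset.exists_mem_ne (by omega : 1 < E.card) e
    exact Finset.single_lt_sum hfe he hf (dRad_pos G hf)
      (fun k hk _ => (dRad_pos G hk).le)
  have hSpos : 0 < S := by
    have hne : E.Nonempty := Finset.card_pos.mp (by omega)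
    exact Finset.sum_pos (fun e he => dRad_pos G he) hne
  -- sum of squares < S^2
  have hsq : ∑ e ∈ E, (dRad G e) ^ 2 < S ^ 2 := by
    calc ∑ e ∈ E, (dRad G e) ^ 2 < ∑ e ∈ E, dRad G e * S := by
          apply Finset.sum_lt_sum_of_nonempty (Finset.card_pos.mp (by omega))
          intro e he
          have := dRad_pos G he
          have := hlt e he
          nlinarith
      _ = S ^ 2 := by
          rw [← Finset.sum_mul]
          have hsum : ∑ i ∈ E, dRad G i = S := rfl
          rw [hsum]; ring
  -- variance identity
  have hvar : ∑ e ∈ E, (dRad G e - S / m) ^ 2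
      = ∑ e ∈ E, (dRad G e) ^ 2 - S ^ 2 / m := by
    have expand : ∀ e ∈ E, (dRad G e - S / m) ^ 2
        = (dRad G e) ^ 2 - 2 * (S / m) * dRad G e + (S / m) ^ 2 := fun e _ => by ring
    rw [Finset.sum_congr rfl expand, Finset.sum_add_distrib, Finset.sum_sub_distrib,
      ← Finset.mul_sum, Finset.sum_const, hm]
    rw [nsmul_eq_mul]
    have hsum : ∑ i ∈ E, dRad G i = S := rfl
    rw [hsum]
    field_simp
    ring
  have hvar_nonneg : (0:ℝ) ≤ (1 / m) * ∑ e ∈ E, (dRad G e - S / m) ^ 2 := by positivity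
  have hLnn : 0 ≤ ((m : ℝ) / Real.sqrt ((m : ℝ) - 1)) *
      Real.sqrt ((1 / m) * ∑ e ∈ E, (dRad G e - S / m) ^ 2) := by positivity
  have key : (((m : ℝ) / Real.sqrt ((m : ℝ) - 1)) *
      Real.sqrt ((1 / m) * ∑ e ∈ E, (dRad G e - S / m) ^ 2)) ^ 2 < S ^ 2 := by
    rw [mul_pow, div_pow, Real.sq_sqrt (by linarith : (0:ℝ) ≤ (m:ℝ) - 1),
      Real.sq_sqrt hvar_nonneg, hvar]
    rw [div_mul_eq_mul_div, div_lt_iff₀ (by linarith)]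
    have h1 : ∑ e ∈ E, (dRad G e) ^ 2 < S ^ 2 := hsq
    have h2' : (0:ℝ) < (m:ℝ) := hmpos
    field_simp
    nlinarith [mul_pos (mul_pos (mul_pos h2' h2') h2') (sub_pos.mpr h1), mul_pos h2' (sub_pos.mpr h1)]
  nlinarith [key, hSpos, hLnn]
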